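/- A ν-Dyck path beginning with a north step and ending with an east step is uniquely determined by the set of lattice points at which its valleys occur; likewise it is uniquely determined by the set of its high peaks. -/

import Mathlib

/-- Steps of a (Schröder) lattice path: north, east, diagonal. -/
inductive Step : Type
  | N | E | D
deriving DecidableEq, Repr

/-- Total horizontal displacement of a path. -/
def eLen (p : List Step) : ℕ := p.count Step.E + p.count Step.D

/-- Total vertical displacement of a path. -/
def nLen (p : List Step) : ℕ := p.count Step.N + p.count Step.D

/-- A lattice path uses only `N` and `E` steps. -/
def IsLatticePath (ν : List Step) : Prop := Step.D ∉ ν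

/-- `colVal p x` is twice the starting height of the step of `p` crossing the vertical
strip between abscissas `x` and `x+1`, plus `1` if that step is diagonal.  Comparing these
values columnwise is equivalent to comparing the heights of the paths over each strip. -/
def colVal : List Step → ℕ → ℕ
  | [], _ => 0
  | Step.N :: p, x => colVal p x + 2
  | Step.E :: _, 0 => 0
  | Step.E :: p, x+1 => colVal p x
  | Step.D :: _, 0 => 1
  | Step.D :: p, x+1 => colVal p x + 2

/-- `π` stays weakly above `ρ` (same endpoints intended). -/
def WeaklyAbove (π ρ : List Step) : Prop := ∀ x, colVal ρ x ≤ colVal π x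

/-- Replace every peak (consecutive `NE`) of a path by a diagonal step; applied to `ν`
this gives the path `μ` of the large ν-Schröder path definition. -/
def cutPeaks : List Step → List Step
  | [] => []
  | Step.N :: Step.E :: p => Step.D :: cutPeaks p
  | s :: p => s :: cutPeaks p

/-- A ν-Dyck path: an `N,E` path with the same endpoints as `ν` staying weakly above `ν`. -/
def IsNuDyck (ν π : List Step) : Prop :=
  Step.D ∉ π ∧ eLen π = eLen ν ∧ nLen π = nLen ν ∧ WeaklyAbove π ν

/-- A (small) ν-Schröder path: an `N,E,D` path with the same endpoints as `ν` staying weakly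
above `ν` (this automatically forbids diagonal steps on the ν-diagonal). -/
def IsSmallSchroder (ν π : List Step) : Prop :=
  eLen π = eLen ν ∧ nLen π = nLen ν ∧ WeaklyAbove π ν

/-- A large ν-Schröder path: an `N,E,D` path with the same endpoints as `ν` staying weakly
above the path obtained from `ν` by replacing each peak by a diagonal step. -/
def IsLargeSchroder (ν π : List Step) : Prop :=
  eLen π = eLen ν ∧ nLen π = nLen ν ∧ WeaklyAbove π (cutPeaks ν)

/-- Number of peaks (consecutive `NE` pairs). -/
def peaks (p : List Step) : ℕ := (p.zip p.tail).count (Step.N, Step.E)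

/-- Number of valleys (consecutive `EN` pairs). -/
def valleys (p : List Step) : ℕ := (p.zip p.tail).count (Step.E, Step.N)

/-- Lattice points at which valleys of a path occur (starting the path at `(x,y)`). -/
def valleyPts : List Step → ℕ → ℕ → List (ℕ × ℕ)
  | [], _, _ => []
  | Step.E :: p, x, y =>
      (if p.head? = some Step.N then [(x+1, y)] else []) ++ valleyPts p (x+1) y
  | Step.N :: p, x, y => valleyPts p x (y+1)
  | Step.D :: p, x, y => valleyPts p (x+1) (y+1)

/-- Lattice points at which high peaks (peaks strictly above `ν`) of a path occur. -/
def highPeakPts (ν : List Step) : List Step → ℕ → ℕ → List (ℕ × ℕ)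
  | [], _, _ => []
  | Step.N :: p, x, y =>
      (if p.head? = some Step.E ∧ colVal ν x < 2*(y+1) then [(x, y+1)] else []) ++
        highPeakPts ν p x (y+1)
  | Step.E :: p, x, y => highPeakPts ν p (x+1) y
  | Step.D :: p, x, y => highPeakPts ν p (x+1) (y+1)

/-- Number of high peaks of `π` relative to `ν`. -/
def highPeaks (ν π : List Step) : ℕ := (highPeakPts ν π 0 0).length

/-- j-th ν-Narayana number: number of ν-Dyck paths with exactly `j` valleys. -/
noncomputable def Nar (ν : List Step) (j : ℕ) : ℕ :=
  Nat.card {π : List Step // IsNuDyck ν π ∧ valleys π = j}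

/-- Number of small ν-Schröder paths with exactly `i` diagonal steps. -/
noncomputable def schNum (ν : List Step) (i : ℕ) : ℕ :=
  Nat.card {π : List Step // IsSmallSchroder ν π ∧ π.count Step.D = i}

/-- `lowH ν x` is the lowest height of a point of `ν` at abscissa `x`. -/
def lowH : List Step → ℕ → ℕ
  | _, 0 => 0
  | [], _+1 => 0
  | Step.N :: p, x+1 => lowH p (x+1) + 1
  | Step.E :: p, x+1 => lowH p x
  | Step.D :: p, x+1 => lowH p x + 1

/-- The lowest lattice path from `(0,0)` to `(b,a)` weakly above the line segment
from `(0,0)` to `(b,a)`. -/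
def nuAB (a b : ℕ) : List Step :=
  (List.range b).flatMap (fun x =>
    List.replicate (((x+1)*a + b - 1)/b - (x*a + b - 1)/b) Step.N ++ [Step.E])

/-- Number of large rational `(a,b)`-Schröder paths with `i` diagonal steps. -/
noncomputable def largeCount (a b i : ℕ) : ℕ :=
  Nat.card {π : List Step // IsLargeSchroder (nuAB a b) π ∧ π.count Step.D = i}

/-- Number of small rational `(a,b)`-Schröder paths with `i` diagonal steps. -/
noncomputable def smallCount (a b i : ℕ) : ℕ :=
  Nat.card {π : List Step // IsSmallSchroder (nuAB a b) π ∧ π.count Step.D = i}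

/-- Binomial coefficient with an integer lower entry (zero when negative). -/
def chooseZ (n : ℕ) (k : ℤ) : ℕ := if 0 ≤ k then n.choose k.toNat else 0

/-- The region weakly above `ν` in the rectangle `[0,b] × [0,a]`. -/
def InRegion (ν : List Step) (p : ℕ × ℕ) : Prop :=
  p.1 ≤ eLen ν ∧ p.2 ≤ nLen ν ∧ lowH ν p.1 ≤ p.2

/-- Two points of the region are ν-incompatible if one is strictly southwest of the other and
the rectangle they span lies in the region (equivalently its bottom-right corner does). -/
def Incompat (ν : List Step) (p q : ℕ × ℕ) : Prop :=
  ((p.1 < q.1 ∧ p.2 < q.2) ∨ (q.1 < p.1 ∧ q.2 < p.2)) ∧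
    InRegion ν (max p.1 q.1, min p.2 q.2)

/-- A ν-binary tree: a maximal set of pairwise ν-compatible points of the region. -/
def IsBinaryTree (ν : List Step) (T : Finset (ℕ × ℕ)) : Prop :=
  (∀ p ∈ T, InRegion ν p) ∧ (∀ p ∈ T, ∀ q ∈ T, ¬ Incompat ν p q) ∧
    ∀ r, InRegion ν r → (∀ p ∈ T, ¬ Incompat ν r p) → r ∈ T

/-- A ν-Schröder tree: pairwise ν-compatible points of the region containing the root
`(0,a)` and meeting every row and every column. -/
def IsSchroderTree (ν : List Step) (T : Finset (ℕ × ℕ)) : Prop :=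
  (∀ p ∈ T, InRegion ν p) ∧ (∀ p ∈ T, ∀ q ∈ T, ¬ Incompat ν p q) ∧
    (0, nLen ν) ∈ T ∧ (∀ y ≤ nLen ν, ∃ p ∈ T, p.2 = y) ∧ (∀ x ≤ eLen ν, ∃ p ∈ T, p.1 = x)

/-- One contraction step: delete a node, provided the result is still a ν-Schröder tree. -/
def ContractStep (ν : List Step) (T T' : Finset (ℕ × ℕ)) : Prop :=
  ∃ q ∈ T, T' = T.erase q ∧ IsSchroderTree ν T'

/-- `p` is a leaf of the (plane tree associated to the) node set `T`: no node strictly below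
it in its column and none strictly to its right in its row. -/
def IsLeafIn (T : Finset (ℕ × ℕ)) (p : ℕ × ℕ) : Prop :=
  (∀ q ∈ T, ¬(q.1 = p.1 ∧ q.2 < p.2)) ∧ (∀ q ∈ T, ¬(q.2 = p.2 ∧ p.1 < q.1))

/-- Starting points of vertical runs and ending points of horizontal runs of `ν`. -/
def leafPts (ν : List Step) : Finset (ℕ × ℕ) :=
  (valleyPts ν 0 0).toFinset ∪ (if ν.head? = some Step.N then {((0 : ℕ), (0 : ℕ))} else ∅) ∪
    (if ν.getLast? = some Step.E then {(eLen ν, nLen ν)} else ∅)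

/-- `horizNu ν x y`: maximal number of east steps that can be placed starting at `(x,y)`
before crossing `ν` (staying within the bounding rectangle). -/
def horizNu (ν : List Step) (x y : ℕ) : ℕ :=
  ((Finset.Icc 1 (eLen ν - x)).filter (fun k => lowH ν (x + k) ≤ y)).card

/-- No `N` step of the given path (started at `(x,y)`) has initial point with
`horizNu`-value `h`. -/
def noNAt (ν : List Step) (h : ℕ) : List Step → ℕ → ℕ → Prop
  | [], _, _ => True
  | Step.N :: p, x, y => horizNu ν x y ≠ h ∧ noNAt ν h p x (y+1)
  | Step.E :: p, x, y => noNAt ν h p (x+1) y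
  | Step.D :: p, x, y => noNAt ν h p (x+1) (y+1)

/-- Right contraction: replace a consecutive `EN` pair (a valley) by a `D` step. -/
def RightC (μ lam : List Step) : Prop :=
  ∃ p q, μ = p ++ Step.E :: Step.N :: q ∧ lam = p ++ Step.D :: q

/-- Left contraction: delete an `E` step together with the most recent preceding `N` step
whose initial point has the same `horizNu` statistic as the initial point of the `E` step,
shift the intermediate subpath, and place a `D` step at the initial point of the `N` step. -/
def LeftC (ν μ lam : List Step) : Prop :=
  ∃ p m q, μ = p ++ Step.N :: (m ++ Step.E :: q) ∧ lam = p ++ Step.D :: (m ++ q) ∧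
    horizNu ν (eLen p) (nLen p)
      = horizNu ν (eLen (p ++ Step.N :: m)) (nLen (p ++ Step.N :: m)) ∧
    noNAt ν (horizNu ν (eLen (p ++ Step.N :: m)) (nLen (p ++ Step.N :: m)))
      m (eLen p) (nLen p + 1)

/-- Diagonal contraction: delete an `E` step ending at the initial point `r` of a `D` step,
together with the most recent preceding `N` step whose initial point `s` satisfies
`horizNu s = horizNu r`, shift the intermediate subpath, and place a `D` step at `s`. -/
def DiagC (ν μ lam : List Step) : Prop :=
  ∃ p m q, μ = p ++ Step.N :: (m ++ Step.E :: Step.D :: q) ∧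
    lam = p ++ Step.D :: (m ++ Step.D :: q) ∧
    horizNu ν (eLen p) (nLen p)
      = horizNu ν (eLen (p ++ Step.N :: m) + 1) (nLen (p ++ Step.N :: m)) ∧
    noNAt ν (horizNu ν (eLen (p ++ Step.N :: m) + 1) (nLen (p ++ Step.N :: m)))
      m (eLen p) (nLen p + 1)

/-- Cover relation of the contraction poset of ν-Schröder paths. -/
def Covers (ν μ lam : List Step) : Prop :=
  IsSmallSchroder ν μ ∧ IsSmallSchroder ν lam ∧
    (RightC μ lam ∨ LeftC ν μ lam ∨ DiagC ν μ lam)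

/-- The Morse matching: `σ` (having a `D` step preceded by no valley) is matched with the
path `π` obtained by replacing the first such `D` step by `EN`. -/
def MorseM (ν : List Step) : Set (List Step × List Step) :=
  { z | ∃ p q, Step.D ∉ p ∧ valleys p = 0 ∧
      z.2 = p ++ Step.D :: q ∧ z.1 = p ++ Step.E :: Step.N :: q ∧ IsSmallSchroder ν z.2 }

/-- Twice the area between a small ν-Schröder path and `ν`. -/
def area2 (ν π : List Step) : ℕ :=
  ∑ x ∈ Finset.range (eLen ν), (colVal π x - colVal ν x)

/-- An `(I,J̄)`-forest: increasing, non-crossing arcs. -/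
def IsIJForest (I J : Finset ℕ) (F : Finset (ℕ × ℕ)) : Prop :=
  (∀ a ∈ F, a.1 ∈ I ∧ a.2 ∈ J ∧ a.1 < a.2) ∧
    (∀ a ∈ F, ∀ a' ∈ F, ¬(a.1 < a'.1 ∧ a'.1 < a.2 ∧ a.2 < a'.2))

/-- A covering `(I,J̄)`-forest: contains the arc `(1,n)` and has no isolated node. -/
def IsCoveringForest (n : ℕ) (I J : Finset ℕ) (F : Finset (ℕ × ℕ)) : Prop :=
  IsIJForest I J F ∧ (1, n) ∈ F ∧
    (∀ i ∈ I, ∃ a ∈ F, a.1 = i) ∧ (∀ j ∈ J, ∃ a ∈ F, a.2 = j)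

/-- The lattice path read off from the interleaving of `I` and `J̄` (elements `2,…,n-1`,
`E` for elements of `I`, `N` for the others). -/
def nuOf (n : ℕ) (I : Finset ℕ) : List Step :=
  (List.range' 2 (n - 2)).map (fun k => if k ∈ I then Step.E else Step.N)

section Aux

@[simp] lemma eLen_nil : eLen [] = 0 := rfl
@[simp] lemma nLen_nil : nLen [] = 0 := rfl
@[simp] lemma eLen_cons_N (p : List Step) : eLen (Step.N :: p) = eLen p := by
  simp [eLen, List.count_cons]
@[simp] lemma eLen_cons_E (p : List Step) : eLen (Step.E :: p) = eLen p + 1 := by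
  simp [eLen, List.count_cons]
  omega
@[simp] lemma eLen_cons_D (p : List Step) : eLen (Step.D :: p) = eLen p + 1 := by
  simp [eLen, List.count_cons]
  omega
@[simp] lemma nLen_cons_N (p : List Step) : nLen (Step.N :: p) = nLen p + 1 := by
  simp [nLen, List.count_cons]
  omega
@[simp] lemma nLen_cons_E (p : List Step) : nLen (Step.E :: p) = nLen p := by
  simp [nLen, List.count_cons]
@[simp] lemma nLen_cons_D (p : List Step) : nLen (Step.D :: p) = nLen p + 1 := by
  simp [nLen, List.count_cons]
  omega

lemma colVal_append : ∀ (q r : List Step) (x : ℕ),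
    colVal (q ++ r) x = if x < eLen q then colVal q x else colVal r (x - eLen q) + 2 * nLen q
  | [], r, x => by simp [colVal]
  | Step.N :: q, r, x => by
    have := colVal_append q r x
    simp only [List.cons_append, colVal, List.append_eq, this, eLen_cons_N, nLen_cons_N]
    split <;> omega
  | Step.E :: q, r, 0 => by simp [colVal]
  | Step.E :: q, r, x + 1 => by
    have := colVal_append q r x
    simp only [List.cons_append, colVal, List.append_eq, this, eLen_cons_E, nLen_cons_E]
    by_cases h : x < eLen q
    · rw [if_pos h, if_pos (by omega : x + 1 < eLen q + 1)]
    · rw [if_neg h, if_neg (by omega : ¬ x + 1 < eLen q + 1)]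
      congr 2
      omega
  | Step.D :: q, r, 0 => by simp [colVal]
  | Step.D :: q, r, x + 1 => by
    have := colVal_append q r x
    simp only [List.cons_append, colVal, List.append_eq, this, eLen_cons_D, nLen_cons_D]
    by_cases h : x < eLen q
    · rw [if_pos h, if_pos (by omega : x + 1 < eLen q + 1)]
    · rw [if_neg h, if_neg (by omega : ¬ x + 1 < eLen q + 1),
        (by omega : x + 1 - (eLen q + 1) = x - eLen q)]
      ring

lemma colVal_valley (q r : List Step) :
    colVal (q ++ Step.E :: Step.N :: r) (eLen q) = 2 * nLen q := by
  rw [colVal_append, if_neg (lt_irrefl _)]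
  simp [colVal]

lemma colVal_peak (q r : List Step) :
    colVal (q ++ Step.N :: Step.E :: r) (eLen q) = 2 * nLen q + 2 := by
  rw [colVal_append, if_neg (lt_irrefl _)]
  simp [colVal]; ring

lemma colVal_stable : ∀ (p : List Step) (x : ℕ), eLen p ≤ x → colVal p x = 2 * nLen p
  | [], x, _ => by simp [colVal]
  | Step.N :: p, x, h => by
    rw [eLen_cons_N] at h
    simp [colVal, colVal_stable p x h, nLen_cons_N]; ring
  | Step.E :: p, 0, h => by simp at h
  | Step.E :: p, x + 1, h => by
    rw [eLen_cons_E] at h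
    simp [colVal, colVal_stable p x (by omega)]
  | Step.D :: p, 0, h => by simp at h
  | Step.D :: p, x + 1, h => by
    rw [eLen_cons_D] at h
    simp [colVal, colVal_stable p x (by omega)]; ring

lemma colVal_mono : ∀ (p : List Step) (x : ℕ), colVal p x ≤ colVal p (x + 1)
  | [], x => le_refl _
  | Step.N :: p, x => by simp [colVal]; exact colVal_mono p x
  | Step.E :: p, 0 => by simp [colVal]
  | Step.E :: p, x + 1 => by simp [colVal]; exact colVal_mono p x
  | Step.D :: p, 0 => by
    simp only [colVal]
    omega
  | Step.D :: p, x + 1 => by simp [colVal]; exact colVal_mono p x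

lemma colVal_inj : ∀ (p q : List Step), Step.D ∉ p → Step.D ∉ q →
    eLen p = eLen q → nLen p = nLen q → (∀ x, colVal p x = colVal q x) → p = q
  | [], [], _, _, _, _, _ => rfl
  | [], Step.N :: q, _, _, _, hn, _ => by simp at hn
  | [], Step.E :: q, _, _, he, _, _ => by simp at he
  | [], Step.D :: q, _, hq, _, _, _ => by simp at hq
  | Step.N :: p, [], _, _, _, hn, _ => by simp at hn
  | Step.E :: p, [], _, _, he, _, _ => by simp at he
  | Step.D :: p, [], hp, _, _, _, _ => by simp at hp
  | Step.D :: p, _, hp, _, _, _, _ => by simp at hp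
  | _, Step.D :: q, _, hq, _, _, _ => by simp at hq
  | Step.N :: p, Step.N :: q, hp, hq, he, hn, hc => by
    have : p = q := colVal_inj p q (fun h => hp (List.mem_cons_of_mem _ h))
      (fun h => hq (List.mem_cons_of_mem _ h)) (by simpa using he) (by simpa using hn)
      (fun x => by have := hc x; simpa [colVal] using this)
    rw [this]
  | Step.N :: p, Step.E :: q, _, _, _, _, hc => by
    have := hc 0
    simp [colVal] at this
  | Step.E :: p, Step.N :: q, _, _, _, _, hc => by
    have := hc 0
    simp [colVal] at this
  | Step.E :: p, Step.E :: q, hp, hq, he, hn, hc => by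
    have : p = q := colVal_inj p q (fun h => hp (List.mem_cons_of_mem _ h))
      (fun h => hq (List.mem_cons_of_mem _ h)) (by simpa using he) (by simpa using hn)
      (fun x => by have := hc (x + 1); simpa [colVal] using this)
    rw [this]

end Aux

lemma valley_mem : ∀ (p : List Step) (x y u v : ℕ),
    (u, v) ∈ valleyPts p x y ↔
      ∃ q r, p = q ++ Step.E :: Step.N :: r ∧ u = x + eLen q + 1 ∧ v = y + nLen q := by
  intro p
  induction p with
  | nil =>
    intro x y u v
    simp only [valleyPts, List.not_mem_nil, false_iff]
    rintro ⟨q, r, hq, -, -⟩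
    have h := congrArg List.length hq
    simp at h
  | cons s p ih =>
    intro x y u v
    cases s with
    | N =>
      simp only [valleyPts, ih]
      constructor
      · rintro ⟨q, r, rfl, hu, hv⟩
        exact ⟨Step.N :: q, r, rfl, by simpa using hu, by simp [hv]; omega⟩
      · rintro ⟨q, r, hq, hu, hv⟩
        cases q with
        | nil => simp at hq
        | cons s q =>
          rw [List.cons_append] at hq
          injection hq with h1 h2
          subst h1
          exact ⟨q, r, h2, by simpa using hu, by simp at hv; omega⟩
    | E =>
      simp only [valleyPts, List.mem_append, ih]
      by_cases hc : p.head? = some Step.N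
      · obtain ⟨p', rfl⟩ : ∃ p', p = Step.N :: p' := by
          cases p with
          | nil => simp at hc
          | cons a p' =>
            cases a with
            | N => exact ⟨p', rfl⟩
            | E => simp at hc
            | D => simp at hc
        rw [List.head?_cons, if_pos rfl]
        simp only [List.mem_singleton, Prod.mk.injEq]
        constructor
        · rintro (⟨rfl, rfl⟩ | ⟨q, r, hq, hu, hv⟩)
          · exact ⟨[], p', rfl, by simp, by simp⟩
          · exact ⟨Step.E :: q, r, by rw [hq]; rfl, by simp at hu ⊢; omega, by simpa using hv⟩
        · rintro ⟨q, r, hq, hu, hv⟩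
          cases q with
          | nil =>
            left
            simp at hu hv
            exact ⟨hu, hv⟩
          | cons s q =>
            rw [List.cons_append] at hq
            injection hq with h1 h2
            subst h1
            right
            exact ⟨q, r, h2, by simp at hu ⊢; omega, by simpa using hv⟩
      · simp only [if_neg hc, List.not_mem_nil, false_or]
        constructor
        · rintro ⟨q, r, rfl, hu, hv⟩
          exact ⟨Step.E :: q, r, rfl, by simp at hu ⊢; omega, by simpa using hv⟩
        · rintro ⟨q, r, hq, hu, hv⟩
          cases q with
          | nil =>
            simp only [List.nil_append] at hq
            injection hq with h1 h2
            rw [h2] at hc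
            simp at hc
          | cons s q =>
            rw [List.cons_append] at hq
            injection hq with h1 h2
            subst h1
            exact ⟨q, r, h2, by simp at hu ⊢; omega, by simpa using hv⟩
    | D =>
      simp only [valleyPts, ih]
      constructor
      · rintro ⟨q, r, rfl, hu, hv⟩
        exact ⟨Step.D :: q, r, rfl, by simp at hu ⊢; omega, by simp at hv ⊢; omega⟩
      · rintro ⟨q, r, hq, hu, hv⟩
        cases q with
        | nil => simp at hq
        | cons s q =>
          rw [List.cons_append] at hq
          injection hq with h1 h2
          subst h1
          exact ⟨q, r, h2, by simp at hu ⊢; omega, by simp at hv ⊢; omega⟩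

lemma peak_mem (ν : List Step) : ∀ (p : List Step) (x y u v : ℕ),
    (u, v) ∈ highPeakPts ν p x y ↔
      ∃ q r, p = q ++ Step.N :: Step.E :: r ∧ u = x + eLen q ∧ v = y + nLen q + 1 ∧
        colVal ν (x + eLen q) < 2 * (y + nLen q + 1) := by
  intro p
  induction p with
  | nil =>
    intro x y u v
    simp only [highPeakPts, List.not_mem_nil, false_iff]
    rintro ⟨q, r, hq, -, -, -⟩
    have h := congrArg List.length hq
    simp at h
  | cons s p ih =>
    intro x y u v
    cases s with
    | E =>
      simp only [highPeakPts, ih]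
      constructor
      · rintro ⟨q, r, rfl, hu, hv, hcv⟩
        refine ⟨Step.E :: q, r, rfl, ?_, ?_, ?_⟩
        · simp only [eLen_cons_E]; omega
        · simpa using hv
        · simp only [eLen_cons_E, nLen_cons_E]
          have e : x + (eLen q + 1) = x + 1 + eLen q := by ring
          rw [e]; exact hcv
      · rintro ⟨q, r, hq, hu, hv, hcv⟩
        cases q with
        | nil => simp at hq
        | cons s q =>
          rw [List.cons_append] at hq
          injection hq with h1 h2
          subst h1
          refine ⟨q, r, h2, by simp at hu ⊢; omega, by simpa using hv, ?_⟩
          simp only [eLen_cons_E, nLen_cons_E] at hcv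
          have e : x + (eLen q + 1) = x + 1 + eLen q := by ring
          rw [e] at hcv; exact hcv
    | D =>
      simp only [highPeakPts, ih]
      constructor
      · rintro ⟨q, r, rfl, hu, hv, hcv⟩
        refine ⟨Step.D :: q, r, rfl, ?_, ?_, ?_⟩
        · simp only [eLen_cons_D]; omega
        · simp only [nLen_cons_D]; omega
        · simp only [eLen_cons_D, nLen_cons_D]
          have e : x + (eLen q + 1) = x + 1 + eLen q := by ring
          rw [e]
          have e2 : y + (nLen q + 1) + 1 = y + 1 + nLen q + 1 := by ring
          rw [e2]; exact hcv
      · rintro ⟨q, r, hq, hu, hv, hcv⟩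
        cases q with
        | nil => simp at hq
        | cons s q =>
          rw [List.cons_append] at hq
          injection hq with h1 h2
          subst h1
          refine ⟨q, r, h2, by simp at hu ⊢; omega, by simp at hv ⊢; omega, ?_⟩
          simp only [eLen_cons_D, nLen_cons_D] at hcv
          have e : x + (eLen q + 1) = x + 1 + eLen q := by ring
          have e2 : y + (nLen q + 1) + 1 = y + 1 + nLen q + 1 := by ring
          rw [e, e2] at hcv; exact hcv
    | N =>
      simp only [highPeakPts, List.mem_append, ih]
      by_cases hc : p.head? = some Step.E ∧ colVal ν x < 2 * (y + 1)
      · obtain ⟨p', rfl⟩ : ∃ p', p = Step.E :: p' := by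
          rcases p with _ | ⟨a, p'⟩
          · simp at hc
          · cases a with
            | E => exact ⟨p', rfl⟩
            | N => simp at hc
            | D => simp at hc
        rw [if_pos (show (Step.E :: p').head? = some Step.E ∧ colVal ν x < 2 * (y + 1) from
          ⟨rfl, hc.2⟩)]
        simp only [List.mem_singleton, Prod.mk.injEq]
        constructor
        · rintro (⟨rfl, rfl⟩ | ⟨q, r, hq, hu, hv, hcv⟩)
          · exact ⟨[], p', rfl, by simp, by simp, by simpa using hc.2⟩
          · refine ⟨Step.N :: q, r, by rw [hq]; rfl, by simpa using hu,
              by simp at hv ⊢; omega, ?_⟩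
            simp only [eLen_cons_N, nLen_cons_N]
            have e2 : y + (nLen q + 1) + 1 = y + 1 + nLen q + 1 := by ring
            rw [e2]; exact hcv
        · rintro ⟨q, r, hq, hu, hv, hcv⟩
          cases q with
          | nil =>
            left
            simp at hu hv
            exact ⟨hu, hv⟩
          | cons s q =>
            rw [List.cons_append] at hq
            injection hq with h1 h2
            subst h1
            right
            refine ⟨q, r, h2, by simpa using hu, by simp at hv ⊢; omega, ?_⟩
            simp only [eLen_cons_N, nLen_cons_N] at hcv
            have e2 : y + (nLen q + 1) + 1 = y + 1 + nLen q + 1 := by ring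
            rw [e2] at hcv; exact hcv
      · rw [if_neg hc]
        simp only [List.not_mem_nil, false_or]
        constructor
        · rintro ⟨q, r, rfl, hu, hv, hcv⟩
          refine ⟨Step.N :: q, r, rfl, by simpa using hu, by simp at hv ⊢; omega, ?_⟩
          simp only [eLen_cons_N, nLen_cons_N]
          have e2 : y + (nLen q + 1) + 1 = y + 1 + nLen q + 1 := by ring
          rw [e2]; exact hcv
        · rintro ⟨q, r, hq, hu, hv, hcv⟩
          cases q with
          | nil =>
            simp only [List.nil_append] at hq
            injection hq with h1 h2
            exfalso
            apply hc
            constructor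
            · rw [h2]; rfl
            · simpa using hcv
          | cons s q =>
            rw [List.cons_append] at hq
            injection hq with h1 h2
            subst h1
            refine ⟨q, r, h2, by simpa using hu, by simp at hv ⊢; omega, ?_⟩
            simp only [eLen_cons_N, nLen_cons_N] at hcv
            have e2 : y + (nLen q + 1) + 1 = y + 1 + nLen q + 1 := by ring
            rw [e2] at hcv; exact hcv

lemma jump_valley : ∀ (p : List Step) (x : ℕ), Step.D ∉ p → colVal p x < colVal p (x + 1) →
    ∃ q r, p = q ++ Step.E :: Step.N :: r ∧ eLen q = x
  | [], x, _, h => by simp [colVal] at h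
  | Step.N :: p, x, hD, h => by
    have h' : colVal p x < colVal p (x + 1) := by simp only [colVal] at h; omega
    obtain ⟨q, r, rfl, hq⟩ := jump_valley p x (fun hm => hD (List.mem_cons_of_mem _ hm)) h'
    exact ⟨Step.N :: q, r, rfl, by simpa using hq⟩
  | Step.E :: p, 0, hD, h => by
    simp only [colVal] at h
    match p, hD with
    | [], _ => simp [colVal] at h
    | Step.N :: r, _ => exact ⟨[], r, rfl, rfl⟩
    | Step.E :: r, _ => simp [colVal] at h
    | Step.D :: r, hD => exact absurd (by simp) hD
  | Step.E :: p, x + 1, hD, h => by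
    have h' : colVal p x < colVal p (x + 1) := by simpa only [colVal] using h
    obtain ⟨q, r, rfl, hq⟩ := jump_valley p x (fun hm => hD (List.mem_cons_of_mem _ hm)) h'
    exact ⟨Step.E :: q, r, rfl, by simp [hq]⟩
  | Step.D :: p, x, hD, h => absurd (by simp) hD

lemma peak0 : ∀ (p : List Step), Step.D ∉ p → 0 < eLen p → 0 < colVal p 0 →
    ∃ q r, p = q ++ Step.N :: Step.E :: r ∧ eLen q = 0
  | [], _, he, _ => by simp at he
  | Step.E :: p, _, _, hc => by simp [colVal] at hc
  | Step.D :: p, hD, _, _ => absurd (by simp) hD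
  | Step.N :: p, hD, he, hc => by
    match p, hD, he with
    | [], _, he => simp at he
    | Step.E :: r, _, _ => exact ⟨[], r, rfl, rfl⟩
    | Step.D :: r, hD, _ => exact absurd (by simp) hD
    | Step.N :: τ, hD, he =>
      obtain ⟨q, r, hq, he0⟩ := peak0 (Step.N :: τ) (fun hm => hD (List.mem_cons_of_mem _ hm))
        (by simpa using he) (by simp [colVal])
      exact ⟨Step.N :: q, r, by rw [hq]; rfl, by simpa using he0⟩

lemma jump_peak : ∀ (p : List Step) (x : ℕ), Step.D ∉ p → x + 1 < eLen p →
    colVal p x < colVal p (x + 1) → ∃ q r, p = q ++ Step.N :: Step.E :: r ∧ eLen q = x + 1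
  | [], x, _, he, _ => by simp at he
  | Step.N :: p, x, hD, he, h => by
    have h' : colVal p x < colVal p (x + 1) := by simp only [colVal] at h; omega
    obtain ⟨q, r, rfl, hq⟩ := jump_peak p x (fun hm => hD (List.mem_cons_of_mem _ hm))
      (by simpa using he) h'
    exact ⟨Step.N :: q, r, rfl, by simpa using hq⟩
  | Step.E :: p, 0, hD, he, h => by
    have h' : 0 < colVal p 0 := by simp only [colVal] at h; omega
    obtain ⟨q, r, rfl, hq⟩ := peak0 p (fun hm => hD (List.mem_cons_of_mem _ hm))
      (by simp at he; omega) h'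
    exact ⟨Step.E :: q, r, rfl, by simp [hq]⟩
  | Step.E :: p, x + 1, hD, he, h => by
    have h' : colVal p x < colVal p (x + 1) := by simpa only [colVal] using h
    obtain ⟨q, r, rfl, hq⟩ := jump_peak p x (fun hm => hD (List.mem_cons_of_mem _ hm))
      (by simp at he; omega) h'
    exact ⟨Step.E :: q, r, rfl, by simp [hq]⟩
  | Step.D :: p, x, hD, _, _ => absurd (by simp) hD

lemma valley_contra (π σ : List Step) (hπD : Step.D ∉ π) (hσD : Step.D ∉ σ)
    (hV : (valleyPts π 0 0).toFinset = (valleyPts σ 0 0).toFinset)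
    (x : ℕ) (hgt : colVal σ x < colVal π x)
    (heq : colVal π (x + 1) = colVal σ (x + 1)) : False := by
  have hjump : colVal σ x < colVal σ (x + 1) := by
    have := colVal_mono π x
    omega
  obtain ⟨q, r, rfl, hq⟩ := jump_valley σ x hσD hjump
  have hmem : ((x + 1 : ℕ), nLen q) ∈ valleyPts (q ++ Step.E :: Step.N :: r) 0 0 := by
    rw [valley_mem]
    exact ⟨q, r, rfl, by omega, by omega⟩
  have hmem' : ((x + 1 : ℕ), nLen q) ∈ valleyPts π 0 0 := by
    have h := List.mem_toFinset.mpr hmem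
    rw [← hV] at h
    exact List.mem_toFinset.mp h
  rw [valley_mem] at hmem'
  obtain ⟨q', r', rfl, hu', hv'⟩ := hmem'
  have h1 : colVal (q' ++ Step.E :: Step.N :: r') x = 2 * nLen q' := by
    have h := colVal_valley q' r'
    rwa [(by omega : eLen q' = x)] at h
  have h2 : colVal (q ++ Step.E :: Step.N :: r) x = 2 * nLen q := by
    have h := colVal_valley q r
    rwa [hq] at h
  omega

lemma peak_contra (ν π σ : List Step) (hπD : Step.D ∉ π)
    (heπ : eLen π = eLen σ) (hnπ : nLen π = nLen σ) (hσa : WeaklyAbove σ ν)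
    (hH : (highPeakPts ν π 0 0).toFinset = (highPeakPts ν σ 0 0).toFinset)
    (x : ℕ) (hgt : colVal σ x < colVal π x)
    (hmin : ∀ t, t < x → colVal π t = colVal σ t) : False := by
  have hx : x < eLen π := by
    by_contra h
    push_neg at h
    have h1 := colVal_stable π x h
    have h2 := colVal_stable σ x (by omega)
    omega
  have hdec : ∃ q r, π = q ++ Step.N :: Step.E :: r ∧ eLen q = x := by
    cases x with
    | zero => exact peak0 π hπD (by omega) (by omega)
    | succ t =>
      apply jump_peak π t hπD hx
      have h1 := hmin t (by omega)
      have h2 := colVal_mono σ t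
      omega
  obtain ⟨q, r, rfl, hq⟩ := hdec
  have hcv : colVal (q ++ Step.N :: Step.E :: r) x = 2 * nLen q + 2 := by
    have h := colVal_peak q r
    rwa [hq] at h
  have hνx : colVal ν x ≤ colVal σ x := hσa x
  have hmem : ((x : ℕ), nLen q + 1) ∈ highPeakPts ν (q ++ Step.N :: Step.E :: r) 0 0 := by
    rw [peak_mem]
    refine ⟨q, r, rfl, by omega, by omega, ?_⟩
    rw [(by omega : (0 : ℕ) + eLen q = x)]
    omega
  have hmem' : ((x : ℕ), nLen q + 1) ∈ highPeakPts ν σ 0 0 := by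
    have h := List.mem_toFinset.mpr hmem
    rw [hH] at h
    exact List.mem_toFinset.mp h
  rw [peak_mem] at hmem'
  obtain ⟨q', r', rfl, hu', hv', -⟩ := hmem'
  have h1 : colVal (q' ++ Step.N :: Step.E :: r') x = 2 * nLen q' + 2 := by
    have h := colVal_peak q' r'
    rwa [(by omega : eLen q' = x)] at h
  omega

/-- A ν-Dyck path (for ν beginning with a north step and ending with an east
step) is uniquely determined by the set of lattice points of its valleys, and likewise by the
set of lattice points of its high peaks. -/
theorem nuDyck_determined_by_valleys_and_highPeaks (ν : List Step) (hν : IsLatticePath ν)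
    (hhead : ν.head? = some Step.N) (hlast : ν.getLast? = some Step.E)
    (π σ : List Step) (hπ : IsNuDyck ν π) (hσ : IsNuDyck ν σ) :
    ((valleyPts π 0 0).toFinset = (valleyPts σ 0 0).toFinset → π = σ) ∧
    ((highPeakPts ν π 0 0).toFinset = (highPeakPts ν σ 0 0).toFinset → π = σ) := by
  obtain ⟨hπD, heπ, hnπ, hπa⟩ := hπ
  obtain ⟨hσD, heσ, hnσ, hσa⟩ := hσ
  have he : eLen π = eLen σ := heπ.trans heσ.symm
  have hn : nLen π = nLen σ := hnπ.trans hnσ.symm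
  have hbnd : ∀ t, eLen ν ≤ t → colVal π t = colVal σ t := by
    intro t ht
    rw [colVal_stable π t (by omega), colVal_stable σ t (by omega), hnπ, hnσ]
  constructor
  · intro hV
    apply colVal_inj π σ hπD hσD he hn
    by_contra hne
    push_neg at hne
    obtain ⟨x0, hx0⟩ := hne
    set S : Finset ℕ := (Finset.range (eLen ν)).filter (fun t => colVal π t ≠ colVal σ t)
      with hSdef
    have hS : S.Nonempty := by
      refine ⟨x0, Finset.mem_filter.mpr ⟨Finset.mem_range.mpr ?_, hx0⟩⟩
      by_contra h
      exact hx0 (hbnd x0 (by omega))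
    set M := S.max' hS with hMdef
    have hM1 : colVal π M ≠ colVal σ M := (Finset.mem_filter.mp (S.max'_mem hS)).2
    have hM2 : colVal π (M + 1) = colVal σ (M + 1) := by
      by_cases h : M + 1 < eLen ν
      · by_contra hne2
        have hmem : M + 1 ∈ S := Finset.mem_filter.mpr ⟨Finset.mem_range.mpr h, hne2⟩
        have := S.le_max' _ hmem
        omega
      · exact hbnd _ (by omega)
    rcases lt_or_gt_of_ne hM1 with h | h
    · exact valley_contra σ π hσD hπD hV.symm M h hM2.symm
    · exact valley_contra π σ hπD hσD hV M h hM2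
  · intro hH
    apply colVal_inj π σ hπD hσD he hn
    by_contra hne
    push_neg at hne
    obtain ⟨x0, hx0⟩ := hne
    set S : Finset ℕ := (Finset.range (eLen ν)).filter (fun t => colVal π t ≠ colVal σ t)
      with hSdef
    have hS : S.Nonempty := by
      refine ⟨x0, Finset.mem_filter.mpr ⟨Finset.mem_range.mpr ?_, hx0⟩⟩
      by_contra h
      exact hx0 (hbnd x0 (by omega))
    set m := S.min' hS with hmdef
    have hM1 : colVal π m ≠ colVal σ m := (Finset.mem_filter.mp (S.min'_mem hS)).2
    have hmin : ∀ t, t < m → colVal π t = colVal σ t := by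
      intro t ht
      by_contra hne2
      have htν : t < eLen ν := by
        have := Finset.mem_range.mp (Finset.mem_filter.mp (S.min'_mem hS)).1
        omega
      have hmem : t ∈ S := Finset.mem_filter.mpr ⟨Finset.mem_range.mpr htν, hne2⟩
      have := S.min'_le _ hmem
      omega
    rcases lt_or_gt_of_ne hM1 with h | h
    · exact peak_contra ν σ π hσD he.symm hn.symm hπa hH.symm m h
        (fun t ht => (hmin t ht).symm)
    · exact peak_contra ν π σ hπD he hn hσa hH m h hmin
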